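/- Let N = 2^a N' with N' odd, and suppose ℓ and n are positive integers with v_2(ℓ) = a + 1. Then: (1) if v_2(n) ≤ a - 1, the Ramanujan sum c_ℓ(n) = 0; (2) if v_2(n) = a, then c_ℓ(n) = c_ℓ(gcd(n, N)); (3) if v_2(n) ≥ a + 1, then c_ℓ(n) = -c_ℓ(gcd(n, N)). -/

import Mathlib

open Complex

/-- Ramanujan sum: `c_ℓ(n) = ∑_{i ∈ (ℤ/ℓℤ)ˣ} ζ_ℓ^{ni}`. -/
noncomputable def ramanujanSum (ℓ n : ℕ) [NeZero ℓ] : ℂ :=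
  ∑ i : (ZMod ℓ)ˣ, Complex.exp (2 * Real.pi * Complex.I * n * ((i : ZMod ℓ).val) / ℓ)

open Finset ArithmeticFunction

noncomputable def eTerm (ℓ n j : ℕ) : ℂ := Complex.exp (2 * Real.pi * Complex.I * n * j / ℓ)

noncomputable def rSum (ℓ n : ℕ) : ℂ :=
  ∑ j ∈ (Finset.range ℓ).filter (fun j => Nat.Coprime j ℓ), eTerm ℓ n j



lemma eTerm_eq_pow (ℓ n j : ℕ) :
    eTerm ℓ n j = Complex.exp (2 * Real.pi * Complex.I * n / ℓ) ^ j := by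
  rw [eTerm, ← Complex.exp_nat_mul]
  congr 1
  ring

lemma full_sum (ℓ n : ℕ) (hℓ : ℓ ≠ 0) :
    ∑ j ∈ range ℓ, eTerm ℓ n j = if ℓ ∣ n then (ℓ : ℂ) else 0 := by
  simp only [eTerm_eq_pow]
  set z : ℂ := Complex.exp (2 * Real.pi * Complex.I * n / ℓ) with hz
  have hℓc : (ℓ : ℂ) ≠ 0 := Nat.cast_ne_zero.mpr hℓ
  by_cases h : ℓ ∣ n
  · obtain ⟨k, rfl⟩ := h
    have hz1 : z = 1 := by
      rw [hz]
      have : (2 * Real.pi * Complex.I * (↑(ℓ * k)) / ℓ) = (k : ℤ) * (2 * Real.pi * Complex.I) := by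
        push_cast
        field_simp
      rw [this, Complex.exp_int_mul_two_pi_mul_I]
    simp [hz1, if_pos (Dvd.intro k rfl)]
  · rw [if_neg h]
    have hzℓ : z ^ ℓ = 1 := by
      rw [hz, ← Complex.exp_nat_mul]
      have : (ℓ : ℂ) * (2 * Real.pi * Complex.I * n / ℓ) = (n : ℤ) * (2 * Real.pi * Complex.I) := by
        push_cast
        field_simp
      rw [this, Complex.exp_int_mul_two_pi_mul_I]
    have hz1 : z ≠ 1 := by
      intro hz1
      rw [hz, Complex.exp_eq_one_iff] at hz1
      obtain ⟨k, hk⟩ := hz1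
      apply h
      have hI : (2 : ℂ) * Real.pi * Complex.I ≠ 0 := by
        simp [Real.pi_ne_zero, Complex.I_ne_zero]
      have h1 : (n : ℂ) = k * ℓ := by
        field_simp at hk
        apply mul_left_cancel₀ hI
        linear_combination (2 * Real.pi * Complex.I) * hk
      have h2 : (n : ℤ) = k * ℓ := by exact_mod_cast h1
      have : (ℓ : ℤ) ∣ (n : ℤ) := ⟨k, by linarith⟩
      exact_mod_cast this
    rw [geom_sum_eq hz1, hzℓ, sub_self, zero_div]

lemma ramanujanSum_eq_rSum (ℓ n : ℕ) [NeZero ℓ] : ramanujanSum ℓ n = rSum ℓ n := by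
  rw [ramanujanSum, rSum]
  rw [← Finset.sum_coe_sort ((Finset.range ℓ).filter (fun j => Nat.Coprime j ℓ))]
  apply Finset.sum_bij (fun (i : (ZMod ℓ)ˣ) _ => (⟨(i : ZMod ℓ).val, by
    simp only [Finset.mem_coe, Finset.mem_filter, Finset.mem_range]
    exact ⟨ZMod.val_lt _, ZMod.val_coe_unit_coprime i⟩⟩ : ((Finset.range ℓ).filter (fun j => Nat.Coprime j ℓ) : Finset ℕ)))
  · intro a _; exact Finset.mem_univ _
  · intro a _ b _ h
    simp only [Subtype.mk.injEq] at h
    exact Units.ext (ZMod.val_injective ℓ h)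
  · rintro ⟨j, hj⟩ _
    simp only [Finset.mem_filter, Finset.mem_range] at hj
    refine ⟨ZMod.unitOfCoprime j hj.2, Finset.mem_univ _, ?_⟩
    ext
    simp [ZMod.unitOfCoprime, ZMod.val_natCast, Nat.mod_eq_of_lt hj.1]
  · intro a _
    rfl

lemma eTerm_mul (M d n k : ℕ) (hd : d ≠ 0) (hdvd : d ∣ M) (hM : M ≠ 0) :
    eTerm M n (d * k) = eTerm (M / d) n k := by
  obtain ⟨m', rfl⟩ := hdvd
  have hm' : m' ≠ 0 := by rintro rfl; simp at hM
  rw [eTerm, eTerm, Nat.mul_div_cancel_left _ (Nat.pos_of_ne_zero hd)]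
  congr 1
  have hdc : (d : ℂ) ≠ 0 := Nat.cast_ne_zero.mpr hd
  have hmc : (m' : ℂ) ≠ 0 := Nat.cast_ne_zero.mpr hm'
  push_cast
  field_simp

lemma fiber_sum (M d n : ℕ) (hM : M ≠ 0) (hd : d ∣ M) :
    ∑ j ∈ (range M).filter (fun j => M.gcd j = d), eTerm M n j = rSum (M / d) n := by
  have hd0 : d ≠ 0 := by rintro rfl; exact hM (Nat.eq_zero_of_zero_dvd hd)
  have hdpos : 0 < d := Nat.pos_of_ne_zero hd0
  rw [rSum]
  apply Finset.sum_nbij' (i := fun j => j / d) (j := fun k => d * k)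
  · intro j hj
    simp only [mem_filter, mem_range] at hj ⊢
    obtain ⟨hj1, hj2⟩ := hj
    have hdj : d ∣ j := hj2 ▸ Nat.gcd_dvd_right M j
    obtain ⟨q, rfl⟩ := hdj
    rw [Nat.mul_div_cancel_left _ hdpos]
    obtain ⟨m', rfl⟩ := hd
    rw [Nat.mul_div_cancel_left _ hdpos]
    constructor
    · exact (mul_lt_mul_iff_right₀ hdpos).1 hj1
    · rw [Nat.gcd_mul_left] at hj2
      have h1 : m'.gcd q = 1 := Nat.eq_of_mul_eq_mul_left hdpos (by rw [hj2, mul_one])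
      exact Nat.coprime_comm.mp h1
  · intro k hk
    simp only [mem_filter, mem_range] at hk ⊢
    obtain ⟨hk1, hk2⟩ := hk
    obtain ⟨m', rfl⟩ := hd
    rw [Nat.mul_div_cancel_left _ hdpos] at hk1 hk2
    constructor
    · exact (mul_lt_mul_iff_right₀ hdpos).2 hk1
    · rw [Nat.gcd_mul_left, Nat.Coprime.gcd_eq_one (Nat.coprime_comm.mp hk2), mul_one]
  · intro j hj
    simp only [mem_filter, mem_range] at hj
    have hdj : d ∣ j := hj.2 ▸ Nat.gcd_dvd_right M j
    exact (Nat.mul_div_cancel' hdj)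
  · intro k hk
    rw [Nat.mul_div_cancel_left _ hdpos]
  · intro j hj
    simp only [mem_filter, mem_range] at hj
    have hdj : d ∣ j := hj.2 ▸ Nat.gcd_dvd_right M j
    obtain ⟨q, rfl⟩ := hdj
    rw [Nat.mul_div_cancel_left _ hdpos, eTerm_mul M d n q hd0 hd hM]

lemma range_sum_eq (M n : ℕ) (hM : M ≠ 0) :
    ∑ j ∈ range M, eTerm M n j = ∑ d ∈ M.divisors, rSum d n := by
  rw [← Nat.sum_div_divisors M (fun d => rSum d n)]
  rw [← Finset.sum_fiberwise_of_maps_to (g := fun j => M.gcd j)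
    (fun x _ => Nat.mem_divisors.2 ⟨Nat.gcd_dvd_left M x, hM⟩) (eTerm M n)]
  exact Finset.sum_congr rfl fun d hd => fiber_sum M d n hM (Nat.dvd_of_mem_divisors hd)

lemma divisors_gcd_eq (M n : ℕ) (hM : M ≠ 0) :
    (M.gcd n).divisors = M.divisors.filter (· ∣ n) := by
  ext d
  simp only [Nat.mem_divisors, Finset.mem_filter]
  constructor
  · rintro ⟨hd, _⟩
    exact ⟨⟨hd.trans (Nat.gcd_dvd_left M n), hM⟩, hd.trans (Nat.gcd_dvd_right M n)⟩
  · rintro ⟨⟨h1, _⟩, h2⟩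
    exact ⟨Nat.dvd_gcd h1 h2, Nat.gcd_ne_zero_left hM⟩

lemma rSum_formula (M n : ℕ) (hM : M ≠ 0) :
    rSum M n = ∑ d ∈ (M.gcd n).divisors, ((ArithmeticFunction.moebius (M / d) : ℤ) : ℂ) * d := by
  have key := (ArithmeticFunction.sum_eq_iff_sum_smul_moebius_eq
    (f := fun d => rSum d n) (g := fun M => if M ∣ n then (M : ℂ) else 0)).mp
    (fun M hM' => by rw [← range_sum_eq M n hM'.ne', full_sum M n hM'.ne'])
    M (Nat.pos_of_ne_zero hM)
  rw [← key, Nat.sum_divisorsAntidiagonal'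
    (f := fun x y => (ArithmeticFunction.moebius x : ℤ) • (if y ∣ n then (y : ℂ) else 0))]
  rw [divisors_gcd_eq M n hM, Finset.sum_filter]
  apply Finset.sum_congr rfl
  intro d hd
  by_cases h : d ∣ n <;> simp [h, zsmul_eq_mul]

lemma pow_dvd_iff2 {k x : ℕ} (hx : x ≠ 0) : 2 ^ k ∣ x ↔ k ≤ padicValNat 2 x :=
  padicValNat_dvd_iff_le hx

lemma val2_le_of_dvd {d x : ℕ} (hx : x ≠ 0) (h : d ∣ x) :
    padicValNat 2 d ≤ padicValNat 2 x :=
  (pow_dvd_iff2 hx).mp ((pow_padicValNat_dvd).trans h)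

lemma odd_part {x : ℕ} (hx : x ≠ 0) :
    ∃ t, ¬ 2 ∣ t ∧ x = 2 ^ (padicValNat 2 x) * t := by
  refine ⟨ordCompl[2] x, ?_, ?_⟩
  · have := Nat.not_dvd_ordCompl Nat.prime_two hx
    exact this
  · rw [← Nat.factorization_def x Nat.prime_two]
    exact (Nat.ordProj_mul_ordCompl_eq_self x 2).symm

lemma val2_eq {k x : ℕ} (hx : x ≠ 0) (h1 : 2 ^ k ∣ x) (h2 : ¬ 2 ^ (k + 1) ∣ x) :
    padicValNat 2 x = k := by
  rw [pow_dvd_iff2 hx] at h1 h2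
  omega

lemma coprime_pow_odd {k t : ℕ} (ht : ¬ 2 ∣ t) : Nat.Coprime (2 ^ k) t :=
  Nat.Coprime.pow_left k (Nat.prime_two.coprime_iff_not_dvd.mpr ht)

lemma odd_dvd_of_dvd_two_mul {t x : ℕ} (ht : ¬ 2 ∣ t) (h : t ∣ 2 * x) : t ∣ x :=
  Nat.Coprime.dvd_of_dvd_mul_left (Nat.coprime_two_right.mpr (Nat.odd_iff.mpr (Nat.two_dvd_ne_zero.mp ht))) h

lemma mu_two_mul {x : ℕ} (hx : ¬ 2 ∣ x) :
    ArithmeticFunction.moebius (2 * x) = - ArithmeticFunction.moebius x := by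
  rw [ArithmeticFunction.isMultiplicative_moebius.map_mul_of_coprime
    (Nat.prime_two.coprime_iff_not_dvd.mpr hx),
    ArithmeticFunction.moebius_apply_prime Nat.prime_two]
  ring

lemma mu_vanish {ℓ d : ℕ} (hℓ : ℓ ≠ 0) (hd : d ∣ ℓ)
    (h : padicValNat 2 d + 2 ≤ padicValNat 2 ℓ) :
    ArithmeticFunction.moebius (ℓ / d) = 0 := by
  have hd0 : d ≠ 0 := by rintro rfl; exact hℓ (Nat.eq_zero_of_zero_dvd hd)
  obtain ⟨t, ht, hdt⟩ := odd_part hd0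
  have h4d : 4 * d ∣ ℓ := by
    have h1 : 2 ^ (padicValNat 2 d + 2) ∣ ℓ := (pow_dvd_iff2 hℓ).mpr (by
      have := (pow_dvd_iff2 hℓ).mp ((pow_padicValNat_dvd).trans hd); omega)
    have h2 : t ∣ ℓ := dvd_trans (Dvd.intro_left _ hdt.symm) hd
    have hco : Nat.Coprime (2 ^ (padicValNat 2 d + 2)) t := coprime_pow_odd ht
    have := Nat.Coprime.mul_dvd_of_dvd_of_dvd hco h1 h2
    have heq : 4 * d = 2 ^ (padicValNat 2 d + 2) * t := by
      conv_lhs => rw [hdt]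
      ring
    rw [heq]
    exact this
  have h4 : 4 ∣ ℓ / d := (Nat.dvd_div_iff_mul_dvd hd).mpr (by rwa [mul_comm])
  apply ArithmeticFunction.moebius_eq_zero_of_not_squarefree
  intro hsq
  have := hsq 2 (by rw [show (2*2 : ℕ) = 4 from rfl]; exact h4)
  simp at this

lemma sum_neg {ℓ a g2 : ℕ} (hℓ0 : ℓ ≠ 0) (hvℓ : padicValNat 2 ℓ = a + 1)
    (hg2 : 2 * g2 ∣ ℓ) (hvg2 : padicValNat 2 g2 = a) :
    ∑ d ∈ (2 * g2).divisors, ((ArithmeticFunction.moebius (ℓ / d) : ℤ) : ℂ) * d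
      = - ∑ d ∈ g2.divisors, ((ArithmeticFunction.moebius (ℓ / d) : ℤ) : ℂ) * d := by
  set f : ℕ → ℂ := fun d => ((ArithmeticFunction.moebius (ℓ / d) : ℤ) : ℂ) * d with hf
  have hg20 : g2 ≠ 0 := by rintro rfl; simp at hg2; exact hℓ0 hg2
  have h2g20 : 2 * g2 ≠ 0 := by positivity
  have hg2ℓ : g2 ∣ ℓ := (dvd_mul_left g2 2).trans hg2
  have h2a : (2:ℕ) ^ a ∣ g2 := hvg2 ▸ pow_padicValNat_dvd
  have h2a1 : ¬ (2:ℕ) ^ (a+1) ∣ g2 := by rw [pow_dvd_iff2 hg20, hvg2]; omega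
  set C := g2.divisors.filter (fun d => 2 ^ a ∣ d) with hC
  -- step 1
  have step1 : ∑ d ∈ C, f d = ∑ d ∈ g2.divisors, f d := by
    apply Finset.sum_filter_of_ne
    intro d hd hfd
    by_contra hnd
    have hd0 : d ≠ 0 := (Nat.pos_of_mem_divisors hd).ne'
    have hdg2 : d ∣ g2 := Nat.dvd_of_mem_divisors hd
    have hvd : padicValNat 2 d < a := by
      rw [pow_dvd_iff2 hd0] at hnd
      have := val2_le_of_dvd hg20 hdg2
      omega
    have := mu_vanish hℓ0 (hdg2.trans hg2ℓ) (by omega)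
    apply hfd
    rw [hf]
    simp [this]
  -- step 2
  have hdisj : Disjoint g2.divisors (C.image (fun e => 2 * e)) := by
    rw [Finset.disjoint_right]
    intro d hd hd2
    simp only [Finset.mem_image, hC, Finset.mem_filter] at hd
    obtain ⟨e, ⟨he1, he2⟩, rfl⟩ := hd
    have : (2:ℕ) ^ (a+1) ∣ g2 := by
      calc (2:ℕ)^(a+1) = 2 * 2^a := by ring
      _ ∣ 2 * e := mul_dvd_mul_left 2 he2
      _ ∣ g2 := Nat.dvd_of_mem_divisors hd2
    exact h2a1 this
  have step2 : (2 * g2).divisors = g2.divisors ∪ C.image (fun e => 2 * e) := by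
    ext d
    simp only [Nat.mem_divisors, Finset.mem_union, Finset.mem_image, hC, Finset.mem_filter]
    constructor
    · rintro ⟨hd, -⟩
      by_cases hdg : d ∣ g2
      · exact Or.inl ⟨hdg, hg20⟩
      · right
        have hd0 : d ≠ 0 := by rintro rfl; exact h2g20 (Nat.eq_zero_of_zero_dvd hd)
        obtain ⟨t, ht, hdt⟩ := odd_part hd0
        have htg2 : t ∣ g2 := odd_dvd_of_dvd_two_mul ht
          ((dvd_trans (Dvd.intro_left _ hdt.symm) hd))
        have hvd_ge : a + 1 ≤ padicValNat 2 d := by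
          by_contra hlt
          push_neg at hlt
          apply hdg
          rw [hdt]
          exact Nat.Coprime.mul_dvd_of_dvd_of_dvd (coprime_pow_odd ht)
            ((pow_dvd_pow 2 (by omega)).trans h2a) htg2
        have hv2g2 : padicValNat 2 (2 * g2) = a + 1 := by
          apply val2_eq h2g20
          · calc (2:ℕ)^(a+1) = 2 * 2^a := by ring
            _ ∣ 2 * g2 := mul_dvd_mul_left 2 h2a
          · intro hcon
            apply h2a1
            have : (2:ℕ) * 2^(a+1) ∣ 2 * g2 := by
              calc (2:ℕ) * 2^(a+1) = 2^(a+2) := by ring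
              _ ∣ 2 * g2 := hcon
            exact (Nat.mul_dvd_mul_iff_left (by norm_num : 0 < 2)).mp this
        have hvd_le := val2_le_of_dvd h2g20 hd
        rw [hv2g2] at hvd_le
        have hvd : padicValNat 2 d = a + 1 := le_antisymm hvd_le hvd_ge
        refine ⟨2^a * t, ⟨⟨Nat.Coprime.mul_dvd_of_dvd_of_dvd (coprime_pow_odd ht) h2a htg2, hg20⟩,
          dvd_mul_right _ _⟩, ?_⟩
        rw [hdt, hvd]
        ring
    · rintro (⟨hd, -⟩ | ⟨e, ⟨⟨he1, -⟩, -⟩, rfl⟩)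
      · exact ⟨hd.trans (dvd_mul_left g2 2), by positivity⟩
      · exact ⟨mul_dvd_mul_left 2 he1, by positivity⟩
  -- step 4
  have step4 : ∀ e ∈ C, f (2 * e) = -2 * f e := by
    intro e he
    simp only [hC, Finset.mem_filter] at he
    obtain ⟨he1, he2⟩ := he
    have h2e : 2 * e ∣ ℓ := (mul_dvd_mul_left 2 (Nat.dvd_of_mem_divisors he1)).trans hg2
    have he0 : e ≠ 0 := (Nat.pos_of_mem_divisors he1).ne'
    obtain ⟨k, hk⟩ := h2e
    have hke : ℓ / (2 * e) = k := by rw [hk, Nat.mul_div_cancel_left _ (by positivity)]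
    have hle : ℓ / e = 2 * k := by
      rw [hk, show 2 * e * k = e * (2 * k) by ring, Nat.mul_div_cancel_left _ (Nat.pos_of_ne_zero he0)]
    have hkodd : ¬ 2 ∣ k := by
      intro h2k
      have : (2:ℕ)^(a+2) ∣ ℓ := by
        obtain ⟨k', rfl⟩ := h2k
        obtain ⟨e', rfl⟩ := he2
        calc (2:ℕ)^(a+2) ∣ 2^(a+2) * (e' * k') := dvd_mul_right _ _
        _ = ℓ := by rw [hk]; ring
      rw [pow_dvd_iff2 hℓ0, hvℓ] at this
      omega
    rw [hf]
    simp only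
    rw [hke, hle, mu_two_mul hkodd]
    push_cast
    ring
  -- combine
  rw [step2, Finset.sum_union hdisj, Finset.sum_image (fun a _ b _ h => by omega),
    Finset.sum_congr rfl step4, ← step1]
  rw [Finset.sum_congr rfl (fun e he => rfl : ∀ e ∈ C, (-2 : ℂ) * f e = -2 * f e)]
  rw [← Finset.mul_sum]
  ring


theorem ramanujan_sum_twoAdic (a N' N ℓ : ℕ) (hN' : Odd N') (hN : N = 2 ^ a * N')
    [NeZero N'] [NeZero ℓ] (hℓdvd : ℓ ∣ 2 * N) (hℓ : padicValNat 2 ℓ = a + 1) :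
    ∀ n : ℕ, 0 < n →
      (padicValNat 2 n + 1 ≤ a → ramanujanSum ℓ n = 0) ∧
      (padicValNat 2 n = a → ramanujanSum ℓ n = ramanujanSum ℓ (Nat.gcd n N)) ∧
      (a + 1 ≤ padicValNat 2 n → ramanujanSum ℓ n = -ramanujanSum ℓ (Nat.gcd n N)) := by
  intro n hn
  have hn0 : n ≠ 0 := hn.ne'
  have hℓ0 : ℓ ≠ 0 := NeZero.ne ℓ
  have hN0 : N ≠ 0 := by
    rw [hN]; exact mul_ne_zero (pow_ne_zero a two_ne_zero) (NeZero.ne N')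
  have hgnN0 : n.gcd N ≠ 0 := Nat.gcd_ne_zero_left hn0
  have formula : ∀ k, ramanujanSum ℓ k
      = ∑ d ∈ (ℓ.gcd k).divisors, ((ArithmeticFunction.moebius (ℓ / d) : ℤ) : ℂ) * d :=
    fun k => by rw [ramanujanSum_eq_rSum, rSum_formula ℓ k hℓ0]
  have hN'odd : ¬ 2 ∣ N' := by
    rw [Nat.odd_iff] at hN'
    omega
  have hvN : padicValNat 2 N = a := by
    apply val2_eq hN0 (hN ▸ dvd_mul_right _ _)
    rw [hN]
    intro hcon
    apply hN'odd
    have : (2:ℕ)^a * 2 ∣ 2^a * N' := by rwa [← pow_succ]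
    exact (Nat.mul_dvd_mul_iff_left (Nat.pos_of_ne_zero (pow_ne_zero a two_ne_zero))).mp this
  have h2aN : (2:ℕ)^a ∣ N := hvN ▸ pow_padicValNat_dvd
  have h2a1ℓ : (2:ℕ)^(a+1) ∣ ℓ := hℓ ▸ pow_padicValNat_dvd
  have h2aℓ : (2:ℕ)^a ∣ ℓ := (pow_dvd_pow 2 (by omega)).trans h2a1ℓ
  have hoddN : ∀ t : ℕ, ¬ 2 ∣ t → t ∣ ℓ → t ∣ N := fun t ht htℓ =>
    odd_dvd_of_dvd_two_mul ht (htℓ.trans hℓdvd)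
  refine ⟨?_, ?_, ?_⟩
  · -- case 1
    intro h
    rw [formula n]
    apply Finset.sum_eq_zero
    intro d hd
    have hd0 : d ≠ 0 := (Nat.pos_of_mem_divisors hd).ne'
    have hdg : d ∣ ℓ.gcd n := Nat.dvd_of_mem_divisors hd
    have hdℓ : d ∣ ℓ := hdg.trans (Nat.gcd_dvd_left ℓ n)
    have hdn : d ∣ n := hdg.trans (Nat.gcd_dvd_right ℓ n)
    have hvd : padicValNat 2 d ≤ padicValNat 2 n := val2_le_of_dvd hn0 hdn
    have := mu_vanish hℓ0 hdℓ (by omega)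
    simp [this]
  · -- case 2
    intro h
    have key : ℓ.gcd n = ℓ.gcd (n.gcd N) := by
      apply Nat.dvd_antisymm
      · apply Nat.dvd_gcd (Nat.gcd_dvd_left ℓ n)
        apply Nat.dvd_gcd (Nat.gcd_dvd_right ℓ n)
        -- ℓ.gcd n ∣ N
        have hg0 : ℓ.gcd n ≠ 0 := Nat.gcd_ne_zero_left hℓ0
        obtain ⟨t, ht, hgt⟩ := odd_part hg0
        have hvg : padicValNat 2 (ℓ.gcd n) ≤ a :=
          h ▸ val2_le_of_dvd hn0 (Nat.gcd_dvd_right ℓ n)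
        rw [hgt]
        exact Nat.Coprime.mul_dvd_of_dvd_of_dvd (coprime_pow_odd ht)
          ((pow_dvd_pow 2 hvg).trans h2aN)
          (hoddN t ht ((Dvd.intro_left _ hgt.symm).trans (Nat.gcd_dvd_left ℓ n)))
      · exact Nat.dvd_gcd (Nat.gcd_dvd_left _ _)
          ((Nat.gcd_dvd_right ℓ (n.gcd N)).trans (Nat.gcd_dvd_left n N))
    rw [formula n, formula (n.gcd N), key]
  · -- case 3
    intro h
    set g2 := ℓ.gcd (n.gcd N) with hg2def
    have hg20 : g2 ≠ 0 := Nat.gcd_ne_zero_left hℓ0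
    have h2a1n : (2:ℕ)^(a+1) ∣ n := (pow_dvd_iff2 hn0).mpr (by omega)
    have h2an : (2:ℕ)^a ∣ n := (pow_dvd_pow 2 (by omega)).trans h2a1n
    have hvg2 : padicValNat 2 g2 = a := by
      apply val2_eq hg20
      · exact Nat.dvd_gcd h2aℓ (Nat.dvd_gcd h2an h2aN)
      · intro hcon
        have : (2:ℕ)^(a+1) ∣ N :=
          (hcon.trans ((Nat.gcd_dvd_right ℓ (n.gcd N)).trans (Nat.gcd_dvd_right n N)))
        rw [pow_dvd_iff2 hN0, hvN] at this
        omega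
    have key : ℓ.gcd n = 2 * g2 := by
      apply Nat.dvd_antisymm
      · -- ℓ.gcd n ∣ 2 * g2
        have hg0 : ℓ.gcd n ≠ 0 := Nat.gcd_ne_zero_left hℓ0
        obtain ⟨t, ht, hgt⟩ := odd_part hg0
        have htdvd : t ∣ ℓ.gcd n := Dvd.intro_left _ hgt.symm
        have hvg1 : padicValNat 2 (ℓ.gcd n) = a + 1 := by
          apply val2_eq hg0 (Nat.dvd_gcd h2a1ℓ h2a1n)
          intro hcon
          have : (2:ℕ)^(a+2) ∣ ℓ := hcon.trans (Nat.gcd_dvd_left ℓ n)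
          rw [pow_dvd_iff2 hℓ0, hℓ] at this
          omega
        have hhg2 : 2^a * t ∣ g2 := by
          apply Nat.dvd_gcd
          · exact Nat.Coprime.mul_dvd_of_dvd_of_dvd (coprime_pow_odd ht) h2aℓ
              (htdvd.trans (Nat.gcd_dvd_left ℓ n))
          · apply Nat.dvd_gcd
            · exact Nat.Coprime.mul_dvd_of_dvd_of_dvd (coprime_pow_odd ht) h2an
                (htdvd.trans (Nat.gcd_dvd_right ℓ n))
            · exact Nat.Coprime.mul_dvd_of_dvd_of_dvd (coprime_pow_odd ht) h2aN
                (hoddN t ht (htdvd.trans (Nat.gcd_dvd_left ℓ n)))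
        calc ℓ.gcd n = 2 * (2^a * t) := by rw [hgt, hvg1]; ring
        _ ∣ 2 * g2 := mul_dvd_mul_left 2 hhg2
      · -- 2 * g2 ∣ ℓ.gcd n
        obtain ⟨s, hs, hg2s⟩ := odd_part hg20
        have hsdvd : s ∣ g2 := Dvd.intro_left _ hg2s.symm
        have h1 : 2 * g2 = 2^(a+1) * s := by rw [hg2s, hvg2]; ring
        rw [h1]
        apply Nat.dvd_gcd
        · exact Nat.Coprime.mul_dvd_of_dvd_of_dvd (coprime_pow_odd hs) h2a1ℓ
            (hsdvd.trans (Nat.gcd_dvd_left ℓ (n.gcd N)))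
        · exact Nat.Coprime.mul_dvd_of_dvd_of_dvd (coprime_pow_odd hs) h2a1n
            (hsdvd.trans ((Nat.gcd_dvd_right ℓ (n.gcd N)).trans (Nat.gcd_dvd_left n N)))
    have h2g2ℓ : 2 * g2 ∣ ℓ := key ▸ Nat.gcd_dvd_left ℓ n
    rw [formula n, formula (n.gcd N), key, ← hg2def]
    exact sum_neg hℓ0 hℓ h2g2ℓ hvg2
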